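/- The map T : ℕ × C⟦0,t⟧ → C⟦0,t⟧, (g, s) ↦ (j ↦ 2*(max_{0 ≤ i ≤ j} s i - g)_+ - s j), is surjective, and for each x ∈ C⟦0,t⟧ with K = min_{0 ≤ j ≤ t} x j its preimage equals { (-K, s^r(x)) : K+1 ≤ r ≤ x t } ∪ { (g, s^K(x)) : g ≥ -K }, where the paths s^r(x), K ≤ r ≤ x t, are pairwise distinct and s^K(x) = -x. -/

import Mathlib

/-- Running maximum `max_{0 ≤ i ≤ j} s i`. -/
noncomputable def runMax (s : ℕ → ℤ) (j : ℕ) : ℤ :=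
  (Finset.range (j + 1)).sup' (Finset.nonempty_range_iff.mpr (Nat.succ_ne_zero j)) s

/-- Backward running minimum `K_j(x) = min_{j ≤ i ≤ t} x i` (for `j ≤ t`). -/
noncomputable def backMin (x : ℕ → ℤ) (t j : ℕ) : ℤ :=
  (Finset.Icc (min j t) t).inf' (Finset.nonempty_Icc.mpr (min_le_right j t)) x

/-- `x ∈ C⟦0,t⟧`: `x 0 = 0` and steps in `{-1,0,1}` up to time `t`. -/
def IsPath (t : ℕ) (x : ℕ → ℤ) : Prop :=
  x 0 = 0 ∧ ∀ j : ℕ, 1 ≤ j → j ≤ t → x j - x (j - 1) ∈ ({-1, 0, 1} : Set ℤ)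

/-- `T_g(s)_j = 2*(max_{0 ≤ i ≤ j} s i - g)₊ - s j`. -/
noncomputable def Tmap (g : ℕ) (s : ℕ → ℤ) (j : ℕ) : ℤ :=
  2 * max (runMax s j - (g : ℤ)) 0 - s j

/-- The path `s^r(x)_j = 2*(min(r, K_j(x)) - K) - x j`, where `K = K_0(x)`. -/
noncomputable def sr (x : ℕ → ℤ) (t : ℕ) (r : ℤ) (j : ℕ) : ℤ :=
  2 * (min r (backMin x t j) - backMin x t 0) - x j

lemma bm_le (x : ℕ → ℤ) (t j i : ℕ) (hji : j ≤ i) (hit : i ≤ t) :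
    backMin x t j ≤ x i :=
  Finset.inf'_le _ (Finset.mem_Icc.mpr ⟨le_trans (min_le_left j t) hji, hit⟩)

lemma le_bm (x : ℕ → ℤ) (t j : ℕ) (c : ℤ) (hjt : j ≤ t)
    (h : ∀ i, j ≤ i → i ≤ t → c ≤ x i) : c ≤ backMin x t j := by
  apply Finset.le_inf'
  intro i hi
  rw [Finset.mem_Icc, min_eq_left hjt] at hi
  exact h i hi.1 hi.2

lemma bm_exists (x : ℕ → ℤ) (t j : ℕ) (hjt : j ≤ t) :
    ∃ i, j ≤ i ∧ i ≤ t ∧ backMin x t j = x i := by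
  obtain ⟨i, hi, hval⟩ := Finset.exists_mem_eq_inf' (Finset.nonempty_Icc.mpr (min_le_right j t)) x
  rw [Finset.mem_Icc, min_eq_left hjt] at hi
  exact ⟨i, hi.1, hi.2, hval⟩

lemma bm_mono (x : ℕ → ℤ) (t i j : ℕ) (hij : i ≤ j) (hjt : j ≤ t) :
    backMin x t i ≤ backMin x t j := by
  obtain ⟨m, hm1, hm2, hm3⟩ := bm_exists x t j hjt
  rw [hm3]
  exact bm_le x t i m (le_trans hij hm1) hm2

lemma bm_t (x : ℕ → ℤ) (t : ℕ) : backMin x t t = x t := by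
  simp [backMin]

lemma bm_succ (x : ℕ → ℤ) (t j : ℕ) (hj : j < t) :
    backMin x t j = min (x j) (backMin x t (j + 1)) := by
  have h1 : Finset.Icc (min j t) t = insert j (Finset.Icc (min (j+1) t) t) := by
    rw [min_eq_left hj.le, min_eq_left hj]
    exact (Finset.insert_Icc_add_one_left_eq_Icc hj.le).symm
  rw [backMin, backMin]
  simp_rw [h1]
  rw [Finset.inf'_insert]

lemma le_runMax (s : ℕ → ℤ) (i j : ℕ) (hij : i ≤ j) : s i ≤ runMax s j :=
  Finset.le_sup' _ (Finset.mem_range.mpr (Nat.lt_succ_of_le hij))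

lemma runMax_exists (s : ℕ → ℤ) (j : ℕ) : ∃ i ≤ j, runMax s j = s i := by
  obtain ⟨i, hi, hval⟩ := Finset.exists_mem_eq_sup' (Finset.nonempty_range_iff.mpr (Nat.succ_ne_zero j)) s
  exact ⟨i, Nat.lt_succ_iff.mp (Finset.mem_range.mp hi), hval⟩

lemma runMax_mono (s : ℕ → ℤ) (i j : ℕ) (hij : i ≤ j) : runMax s i ≤ runMax s j := by
  obtain ⟨m, hm1, hm2⟩ := runMax_exists s i
  rw [hm2]
  exact le_runMax s m j (le_trans hm1 hij)

lemma runMax_le (s : ℕ → ℤ) (j : ℕ) (c : ℤ) (h : ∀ i ≤ j, s i ≤ c) : runMax s j ≤ c := by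
  obtain ⟨m, hm1, hm2⟩ := runMax_exists s j
  rw [hm2]; exact h m hm1

lemma runMax_congr (s s' : ℕ → ℤ) (j : ℕ) (h : ∀ i ≤ j, s i = s' i) :
    runMax s j = runMax s' j := by
  apply Finset.sup'_congr _ rfl
  intro i hi
  exact h i (Nat.lt_succ_iff.mp (Finset.mem_range.mp hi))

lemma step_bounds (t : ℕ) (x : ℕ → ℤ) (hx : IsPath t x) (j : ℕ) (h1 : 1 ≤ j) (h2 : j ≤ t) :
    x (j-1) - 1 ≤ x j ∧ x j ≤ x (j-1) + 1 := by
  have := hx.2 j h1 h2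
  simp only [Set.mem_insert_iff, Set.mem_singleton_iff] at this
  omega

lemma hit (t : ℕ) (x : ℕ → ℤ) (hx : IsPath t x) (j : ℕ) (hjt : j ≤ t) (ρ : ℤ)
    (hKρ : backMin x t 0 < ρ) (hρj : ρ ≤ backMin x t j) :
    ∃ i, 1 ≤ i ∧ i ≤ j ∧ x i = ρ ∧ backMin x t i = ρ := by
  classical
  set S : Finset ℕ := (Finset.range (t+1)).filter (fun i => x i < ρ) with hS
  have hSne : S.Nonempty := by
    obtain ⟨m, _, hm2, hm3⟩ := bm_exists x t 0 (Nat.zero_le t)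
    exact ⟨m, Finset.mem_filter.mpr ⟨Finset.mem_range.mpr (by omega), by rw [← hm3]; exact hKρ⟩⟩
  set i := S.max' hSne with hi
  have hiS : i ∈ S := S.max'_mem hSne
  have hit' : i ≤ t := by
    have := (Finset.mem_filter.mp hiS).1; rw [Finset.mem_range] at this; omega
  have hxi : x i < ρ := (Finset.mem_filter.mp hiS).2
  have hmax : ∀ i', i < i' → i' ≤ t → ρ ≤ x i' := by
    intro i' h1 h2
    by_contra hcon
    push_neg at hcon
    have : i' ∈ S := Finset.mem_filter.mpr ⟨Finset.mem_range.mpr (by omega), hcon⟩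
    exact absurd (S.le_max' i' this) (by omega)
  have hij : i < j := by
    by_contra hcon
    push_neg at hcon
    have := bm_le x t j i hcon hit'
    omega
  refine ⟨i+1, by omega, by omega, ?_, ?_⟩
  · have h1 : ρ ≤ x (i+1) := hmax (i+1) (by omega) (by omega)
    have h2 := step_bounds t x hx (i+1) (by omega) (by omega)
    simp only [Nat.add_sub_cancel] at h2
    omega
  · have h1 : ρ ≤ x (i+1) := hmax (i+1) (by omega) (by omega)
    have h2 := step_bounds t x hx (i+1) (by omega) (by omega)
    simp only [Nat.add_sub_cancel] at h2
    have hx1 : x (i+1) = ρ := by omega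
    refine le_antisymm (by rw [← hx1]; exact bm_le x t (i+1) (i+1) le_rfl (by omega)) ?_
    exact le_bm x t (i+1) ρ (by omega) (fun i' h1' h2' => hmax i' (by omega) h2')

lemma runMax_sr (t : ℕ) (x : ℕ → ℤ) (hx : IsPath t x) (r : ℤ)
    (hr : backMin x t 0 ≤ r) (j : ℕ) (hjt : j ≤ t) :
    max (runMax (sr x t r) j) (-(backMin x t 0)) =
      min r (backMin x t j) - 2 * backMin x t 0 := by
  set K := backMin x t 0 with hK
  apply le_antisymm
  · apply max_le
    · apply runMax_le
      intro i hij
      have hit' : i ≤ t := le_trans hij hjt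
      have h1 : backMin x t i ≤ x i := bm_le x t i i le_rfl hit'
      have h2 : min r (backMin x t i) ≤ min r (backMin x t j) := by
        exact min_le_min le_rfl (bm_mono x t i j hij hjt)
      have h3 : min r (backMin x t i) ≤ x i := le_trans (min_le_right _ _) h1
      simp only [sr, ← hK]
      omega
    · have : K ≤ min r (backMin x t j) :=
        le_min hr (bm_mono x t 0 j (Nat.zero_le j) hjt)
      omega
  · by_cases hcase : min r (backMin x t j) ≤ K
    · have : K ≤ min r (backMin x t j) :=
        le_min hr (bm_mono x t 0 j (Nat.zero_le j) hjt)
      have heq : min r (backMin x t j) = K := le_antisymm hcase this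
      rw [heq]
      have := le_max_right (runMax (sr x t r) j) (-K)
      omega
    · push_neg at hcase
      set ρ := min r (backMin x t j) with hρ
      obtain ⟨i, hi1, hi2, hi3, hi4⟩ := hit t x hx j hjt ρ hcase (min_le_right _ _)
      have hsri : sr x t r i = ρ - 2 * K := by
        simp only [sr, ← hK, hi3, hi4]
        have : min r ρ = ρ := min_eq_right (min_le_left _ _)
        rw [this]; ring
      have := le_runMax (sr x t r) i j hi2
      rw [hsri] at this
      have := le_max_left (runMax (sr x t r) j) (-K)
      omega
lemma sr_K (t : ℕ) (x : ℕ → ℤ) (j : ℕ) (hjt : j ≤ t) :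
    sr x t (backMin x t 0) j = -x j := by
  have h : min (backMin x t 0) (backMin x t j) = backMin x t 0 :=
    min_eq_left (bm_mono x t 0 j (Nat.zero_le j) hjt)
  simp [sr, h]

lemma K_nonpos (t : ℕ) (x : ℕ → ℤ) (hx : IsPath t x) : backMin x t 0 ≤ 0 := by
  have := bm_le x t 0 0 le_rfl (Nat.zero_le t)
  rw [hx.1] at this; exact this

lemma sr_isPath (t : ℕ) (x : ℕ → ℤ) (hx : IsPath t x) (r : ℤ)
    (hr : backMin x t 0 ≤ r) : IsPath t (sr x t r) := by
  constructor
  · have : min r (backMin x t 0) = backMin x t 0 := min_eq_right hr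
    simp [sr, this, hx.1]
  · intro j h1 h2
    have hbm : backMin x t (j-1) = min (x (j-1)) (backMin x t j) := by
      have := bm_succ x t (j-1) (by omega)
      rwa [show j - 1 + 1 = j by omega] at this
    have hstep := hx.2 j h1 h2
    simp only [Set.mem_insert_iff, Set.mem_singleton_iff] at hstep ⊢
    have hbmxj : backMin x t j ≤ x j := bm_le x t j j le_rfl h2
    by_cases hc : backMin x t j ≤ x (j-1)
    · have : backMin x t (j-1) = backMin x t j := by rw [hbm]; exact min_eq_right hc
      simp only [sr, this]
      omega
    · push_neg at hc
      have hb1 : backMin x t (j-1) = x (j-1) := by rw [hbm]; exact min_eq_left hc.le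
      have hxj : x j = x (j-1) + 1 := by omega
      have hbj : backMin x t j = x (j-1) + 1 := by omega
      simp only [sr, hb1, hbj]
      by_cases hrc : r ≤ x (j-1)
      · rw [min_eq_left hrc, min_eq_left (by omega : r ≤ x (j-1) + 1)]
        omega
      · push_neg at hrc
        rw [min_eq_right (by omega : x (j-1) ≤ r)]
        by_cases hrc2 : r ≤ x (j-1) + 1
        · rw [min_eq_left hrc2]; omega
        · rw [min_eq_right (by omega : x (j-1) + 1 ≤ r)]; omega

lemma backward_first (t : ℕ) (x : ℕ → ℤ) (hx : IsPath t x) (g : ℕ) (s : ℕ → ℤ)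
    (hg : (g : ℤ) = -(backMin x t 0)) (r : ℤ) (hr1 : backMin x t 0 + 1 ≤ r)
    (hs : ∀ j ≤ t, s j = sr x t r j) (j : ℕ) (hjt : j ≤ t) :
    Tmap g s j = x j := by
  set K := backMin x t 0 with hK
  have hrm : runMax s j = runMax (sr x t r) j :=
    runMax_congr _ _ j (fun i hi => hs i (le_trans hi hjt))
  have hA := runMax_sr t x hx r (by omega) j hjt
  have hmax : max (runMax (sr x t r) j - (g:ℤ)) 0 = min r (backMin x t j) - K := by
    have : max (runMax (sr x t r) j + K) (-K + K) = (min r (backMin x t j) - 2*K) + K := by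
      rw [max_add_add_right, hA]
    rw [hg]
    omega
  rw [Tmap, hrm, hmax, hs j hjt, sr]
  ring

lemma backward_second (t : ℕ) (x : ℕ → ℤ) (hx : IsPath t x) (g : ℕ) (s : ℕ → ℤ)
    (hg : -(backMin x t 0) ≤ (g : ℤ))
    (hs : ∀ j ≤ t, s j = sr x t (backMin x t 0) j) (j : ℕ) (hjt : j ≤ t) :
    Tmap g s j = x j := by
  have hsj : ∀ i ≤ t, s i = -x i := fun i hi => by rw [hs i hi, sr_K t x i hi]
  have hrm : runMax s j ≤ (g : ℤ) := by
    apply runMax_le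
    intro i hi
    rw [hsj i (le_trans hi hjt)]
    have := bm_le x t 0 i (Nat.zero_le i) (le_trans hi hjt)
    omega
  rw [Tmap, max_eq_right (by omega), hsj j hjt]
  ring
lemma forward (t : ℕ) (x : ℕ → ℤ) (hx : IsPath t x) (g : ℕ) (s : ℕ → ℤ)
    (hs : IsPath t s) (h : ∀ j ≤ t, Tmap g s j = x j) :
    (((g : ℤ) = -(backMin x t 0) ∧
        ∃ r : ℤ, backMin x t 0 + 1 ≤ r ∧ r ≤ x t ∧ ∀ j ≤ t, s j = sr x t r j) ∨
     (-(backMin x t 0) ≤ (g : ℤ) ∧ ∀ j ≤ t, s j = sr x t (backMin x t 0) j)) := by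
  classical
  set K := backMin x t 0 with hK
  by_cases hMg : runMax s t < (g : ℤ)
  · -- s never reaches g : second branch
    right
    have hxs : ∀ j ≤ t, x j = -s j := by
      intro j hjt
      have h1 : runMax s j < (g:ℤ) := lt_of_le_of_lt (runMax_mono s j t hjt) hMg
      have := h j hjt
      rw [Tmap, max_eq_right (by omega)] at this
      omega
    constructor
    · have : -(g:ℤ) ≤ K := by
        apply le_bm x t 0 _ (Nat.zero_le t)
        intro i _ hit'
        have h1 : s i ≤ runMax s t := le_runMax s i t hit'
        rw [hxs i hit']
        omega
      omega
    · intro j hjt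
      rw [sr_K t x j hjt, hxs j hjt]; ring
  · push_neg at hMg
    -- s reaches g; let τ be the first hitting time
    have hex : ∃ j, j ≤ t ∧ (g:ℤ) ≤ s j := by
      obtain ⟨i, hi1, hi2⟩ := runMax_exists s t
      exact ⟨i, hi1, hi2 ▸ hMg⟩
    set τ := Nat.find hex with hτdef
    obtain ⟨hτt, hτg⟩ : τ ≤ t ∧ (g:ℤ) ≤ s τ := Nat.find_spec hex
    have hlt : ∀ j < τ, s j < (g:ℤ) := by
      intro j hjτ
      have := Nat.find_min hex hjτ
      push_neg at this
      exact this (by omega)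
    have hsτ : s τ = (g:ℤ) := by
      rcases Nat.eq_zero_or_pos τ with h0 | h1
      · have : (g:ℤ) ≤ 0 := by rw [h0] at hτg; rw [hs.1] at hτg; exact hτg
        have : (g:ℤ) = 0 := le_antisymm this (Int.natCast_nonneg g)
        rw [h0, hs.1, this]
      · have hstep := step_bounds t s hs τ h1 hτt
        have := hlt (τ-1) (by omega)
        omega
    have hMlt : ∀ j < τ, runMax s j < (g:ℤ) := by
      intro j hjτ
      have : runMax s j ≤ (g:ℤ) - 1 := runMax_le s j _ (fun i hi => by
        have := hlt i (by omega); omega)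
      omega
    have hMge : ∀ j, τ ≤ j → (g:ℤ) ≤ runMax s j := fun j hj =>
      hsτ ▸ le_runMax s τ j hj
    have hxlt : ∀ j < τ, x j = -s j := by
      intro j hjτ
      have := h j (by omega)
      rw [Tmap, max_eq_right (by have := hMlt j hjτ; omega)] at this
      omega
    have hxge : ∀ j, τ ≤ j → j ≤ t → x j = 2 * runMax s j - 2 * g - s j := by
      intro j h1 h2
      have := h j h2
      rw [Tmap, max_eq_left (by have := hMge j h1; omega)] at this
      omega
    have hMτ : runMax s τ = (g:ℤ) := by
      refine le_antisymm (runMax_le s τ _ ?_) (hMge τ le_rfl)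
      intro i hi
      rcases lt_or_eq_of_le hi with h1 | h1
      · exact (hlt i h1).le
      · rw [h1, hsτ]
    have hxτ : x τ = -(g:ℤ)  := by rw [hxge τ le_rfl hτt, hMτ, hsτ]; ring
    have hKg : K = -(g:ℤ) := by
      refine le_antisymm (hxτ ▸ bm_le x t 0 τ (Nat.zero_le τ) hτt) ?_
      apply le_bm x t 0 _ (Nat.zero_le t)
      intro i _ hit'
      rcases lt_or_ge i τ with h1 | h1
      · rw [hxlt i h1]
        have := hlt i h1
        omega
      · rw [hxge i h1 hit']
        have h2 := le_runMax s i i le_rfl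
        have h3 := hMge i h1
        omega
    by_cases hMt : runMax s t ≤ (g:ℤ)
    · -- max exactly g : second branch
      right
      refine ⟨by omega, ?_⟩
      intro j hjt
      rw [sr_K t x j hjt]
      rcases lt_or_ge j τ with h1 | h1
      · rw [hxlt j h1]; ring
      · have hMj : runMax s j = (g:ℤ) :=
          le_antisymm (le_trans (runMax_mono s j t hjt) hMt) (hMge j h1)
        rw [hxge j h1 hjt, hMj]; ring
    · -- first branch
      push_neg at hMt
      left
      refine ⟨by omega, runMax s t - 2*g, by omega, ?_, ?_⟩
      · have h1 := hxge t hτt le_rfl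
        have h2 := le_runMax s t t le_rfl
        omega
      · -- key lemma B
        intro j hjt
        have hB : min (runMax s t - 2*(g:ℤ)) (backMin x t j) =
            max (runMax s j - (g:ℤ)) 0 - g := by
          rcases lt_or_ge j τ with h1 | h1
          · have hb1 : backMin x t j = -(g:ℤ) := by
              refine le_antisymm (hxτ ▸ bm_le x t j τ h1.le hτt) ?_
              have := bm_mono x t 0 j (Nat.zero_le j) hjt
              omega
            rw [hb1, max_eq_right (by have := hMlt j h1; omega),
              min_eq_right (by omega)]
            ring
          · have hRHS : max (runMax s j - (g:ℤ)) 0 = runMax s j - g :=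
              max_eq_left (by have := hMge j h1; omega)
            rw [hRHS]
            have hbmge : runMax s j - 2*(g:ℤ) ≤ backMin x t j := by
              apply le_bm x t j _ hjt
              intro i hji hit'
              rw [hxge i (le_trans h1 hji) hit']
              have h2 := le_runMax s i i le_rfl
              have h3 := runMax_mono s j i hji
              omega
            rcases le_or_gt (runMax s t) (runMax s j) with h2 | h2
            · have : runMax s t = runMax s j := le_antisymm h2 (runMax_mono s j t hjt)
              rw [this, min_eq_left (by omega)]
              ring
            · -- find the last time before the max exceeds runMax s j
              have hex2 : ∃ u, runMax s j < s u := by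
                obtain ⟨i, hi1, hi2⟩ := runMax_exists s t
                exact ⟨i, hi2 ▸ h2⟩
              set u := Nat.find hex2 with hudef
              have hu1 : runMax s j < s u := Nat.find_spec hex2
              have hu2 : ∀ v < u, s v ≤ runMax s j := by
                intro v hv
                have := Nat.find_min hex2 hv
                omega
              have huj : j < u := by
                by_contra hcon
                push_neg at hcon
                have := le_runMax s u j hcon
                omega
              have hut : u ≤ t := by
                by_contra hcon
                push_neg at hcon
                obtain ⟨i, hi1, hi2⟩ := runMax_exists s t
                have : s i ≤ runMax s j := hu2 i (by omega)
                omega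
              have hstep := step_bounds t s hs u (by omega) hut
              have hsu1 : s (u-1) = runMax s j := by
                have := hu2 (u-1) (by omega)
                omega
              have hMu1 : runMax s (u-1) = runMax s j := by
                refine le_antisymm (runMax_le s (u-1) _ (fun i hi => hu2 i (by omega)))
                  (runMax_mono s j (u-1) (by omega))
              have hxu1 : x (u-1) = runMax s j - 2*(g:ℤ) := by
                rw [hxge (u-1) (by omega) (by omega), hMu1, hsu1]
                ring
              have : backMin x t j ≤ runMax s j - 2*(g:ℤ) :=
                hxu1 ▸ bm_le x t j (u-1) (by omega) (by omega)
              have hbm : backMin x t j = runMax s j - 2*(g:ℤ) := le_antisymm this hbmge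
              rw [hbm, min_eq_right (by omega)]
              ring
        have hTj := h j hjt
        rw [Tmap] at hTj
        rw [sr, ← hK, hKg, hB]
        omega


/-- The map `T : ℕ × C⟦0,t⟧ → C⟦0,t⟧` is surjective; the preimage of `x` (with
`K = min_{0≤j≤t} x j`) is `{(-K, s^r(x)) : K+1 ≤ r ≤ x t} ∪ {(g, s^K(x)) : g ≥ -K}`;
the paths `s^r(x)`, `K ≤ r ≤ x t`, are pairwise distinct, and `s^K(x) = -x`. -/
theorem Tmap_surjective_and_preimage (t : ℕ) (x : ℕ → ℤ) (hx : IsPath t x) :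
    (∃ (g : ℕ) (s : ℕ → ℤ), IsPath t s ∧ ∀ j ≤ t, Tmap g s j = x j) ∧
    (∀ (g : ℕ) (s : ℕ → ℤ), IsPath t s →
      ((∀ j ≤ t, Tmap g s j = x j) ↔
        (((g : ℤ) = -(backMin x t 0) ∧
            ∃ r : ℤ, backMin x t 0 + 1 ≤ r ∧ r ≤ x t ∧ ∀ j ≤ t, s j = sr x t r j) ∨
         (-(backMin x t 0) ≤ (g : ℤ) ∧ ∀ j ≤ t, s j = sr x t (backMin x t 0) j)))) ∧
    (∀ r₁ r₂ : ℤ, backMin x t 0 ≤ r₁ → r₁ ≤ x t → backMin x t 0 ≤ r₂ → r₂ ≤ x t →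
      r₁ ≠ r₂ → ∃ j ≤ t, sr x t r₁ j ≠ sr x t r₂ j) ∧
    (∀ j ≤ t, sr x t (backMin x t 0) j = -x j) := by
  refine ⟨?_, ?_, ?_, fun j hjt => sr_K t x j hjt⟩
  · have hK := K_nonpos t x hx
    refine ⟨(-(backMin x t 0)).toNat, fun j => sr x t (backMin x t 0) j,
      sr_isPath t x hx _ le_rfl, ?_⟩
    intro j hjt
    exact backward_second t x hx _ _ (by rw [Int.toNat_of_nonneg (by omega)])
      (fun j hj => rfl) j hjt
  · intro g s hsp
    constructor
    · exact forward t x hx g s hsp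
    · rintro (⟨hg, r, hr1, hr2, hsr⟩ | ⟨hg, hsr⟩) j hjt
      · exact backward_first t x hx g s hg r hr1 hsr j hjt
      · exact backward_second t x hx g s hg hsr j hjt
  · intro r₁ r₂ h1 h2 h3 h4 hne
    refine ⟨t, le_rfl, ?_⟩
    simp only [sr, bm_t]
    rw [min_eq_left h2, min_eq_left h4]
    intro hcon
    omega
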